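/- Let Q be a lower transition rate operator on a finite nonempty set 𝒳, and let (T_t)_{t≥0} be the associated family of operators determined by the differential equation d/dt T_t f = Q(T_t f) with T_0 f = f. Then Q is ergodic if and only if both of the following hold: (i) the set 𝒳_{1A} := {x ∈ 𝒳 : for every y ∈ 𝒳, x is upper reachable from y} is nonempty, and (ii) for every x ∈ 𝒳 \ 𝒳_{1A}, the set 𝒳_{1A} is lower reachable from x. -/

import Mathlib

open Filter Topology

/-- The minimum of a real-valued function on a finite nonempty type. -/
noncomputable def minf {X : Type*} [Fintype X] [Nonempty X] (f : X → ℝ) : ℝ :=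
  Finset.univ.inf' Finset.univ_nonempty f

/-- The maximum of a real-valued function on a finite nonempty type. -/
noncomputable def maxf {X : Type*} [Fintype X] [Nonempty X] (f : X → ℝ) : ℝ :=
  Finset.univ.sup' Finset.univ_nonempty f

/-- The (real-valued) indicator function of a set. -/
noncomputable def ind {X : Type*} (A : Set X) : X → ℝ := A.indicator 1

/-- The conjugate (upper) operator `f ↦ -(Q (-f))`. -/
def conjOp {X : Type*} (Q : (X → ℝ) → (X → ℝ)) : (X → ℝ) → (X → ℝ) :=
  fun f => -(Q (-f))

/-- A lower transition rate operator. -/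
def IsLTRO {X : Type*} [Fintype X] (Q : (X → ℝ) → (X → ℝ)) : Prop :=
  (∀ μ : ℝ, Q (fun _ => μ) = 0) ∧
  (∀ f g : X → ℝ, Q f + Q g ≤ Q (f + g)) ∧
  (∀ l : ℝ, 0 ≤ l → ∀ f : X → ℝ, Q (l • f) = l • Q f) ∧
  (∀ x y : X, x ≠ y → 0 ≤ Q (ind {y}) x)

/-- A lower transition operator. -/
def IsLTO {X : Type*} [Fintype X] [Nonempty X] (T : (X → ℝ) → (X → ℝ)) : Prop :=
  (∀ f : X → ℝ, ∀ x : X, minf f ≤ T f x) ∧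
  (∀ f g : X → ℝ, T f + T g ≤ T (f + g)) ∧
  (∀ l : ℝ, 0 ≤ l → ∀ f : X → ℝ, T (l • f) = l • T f)

/-- `T` is the family of operators solving `d/dt T_t f = Q (T_t f)` on `[0,∞)`
with `T_0 f = f`. -/
def IsSol {X : Type*} [Fintype X] (Q : (X → ℝ) → (X → ℝ))
    (T : ℝ → (X → ℝ) → (X → ℝ)) : Prop :=
  (∀ f : X → ℝ, T 0 f = f) ∧
  (∀ f : X → ℝ, ∀ t : ℝ, 0 ≤ t →
    HasDerivWithinAt (fun s => T s f) (Q (T t f)) (Set.Ici 0) t)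

/-- Ergodicity of a lower transition rate operator, expressed via its
associated time-dependent family `T`. -/
def ErgodicQ {X : Type*} [Fintype X] (T : ℝ → (X → ℝ) → (X → ℝ)) : Prop :=
  ∀ f : X → ℝ, ∃ c : ℝ, Tendsto (fun t => T t f) atTop (𝓝 (fun _ : X => c))

/-- Ergodicity of a lower transition operator. -/
def ErgodicT {X : Type*} [Fintype X] (T : (X → ℝ) → (X → ℝ)) : Prop :=
  ∀ f : X → ℝ, ∃ c : ℝ, Tendsto (fun n : ℕ => T^[n] f) atTop (𝓝 (fun _ : X => c))

/-- `x` is upper reachable from `y` (w.r.t. the lower transition rate operator `Q`). -/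
def upperReach {X : Type*} [Fintype X] (Q : (X → ℝ) → (X → ℝ)) (y x : X) : Prop :=
  ∃ (n : ℕ) (p : ℕ → X), p 0 = y ∧ p n = x ∧
    ∀ k : ℕ, k < n → p (k + 1) ≠ p k ∧ 0 < conjOp Q (ind {p (k + 1)}) (p k)

/-- One step of the lower-reachability construction: `A ↦ A ∪ {y ∉ A : Q(𝟙_A)(y) > 0}`. -/
def lowerStep {X : Type*} [Fintype X] (Q : (X → ℝ) → (X → ℝ)) (A : Set X) : Set X :=
  A ∪ {y : X | y ∉ A ∧ 0 < Q (ind A) y}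

/-- `A` is lower reachable from `x`: `x ∈ Aₙ` where `n` is the first index with
`Aₙ = Aₙ₊₁` (equivalently, any such index, since the sequence is determined by
recursion and increasing). -/
def lowerReach {X : Type*} [Fintype X] (Q : (X → ℝ) → (X → ℝ)) (x : X) (A : Set X) : Prop :=
  ∃ n : ℕ, (lowerStep Q)^[n] A = (lowerStep Q)^[n + 1] A ∧ x ∈ (lowerStep Q)^[n] A

/-- The set `𝒳_RA := {x : ∃ n ≥ 1, min T̄ⁿ 𝟙ₓ > 0}`. -/
noncomputable def XRA {X : Type*} [Fintype X] [Nonempty X]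
    (T : (X → ℝ) → (X → ℝ)) : Set X :=
  {x : X | ∃ n : ℕ, 0 < minf ((conjOp T)^[n + 1] (ind {x}))}

/-- A regularly absorbing lower transition operator. -/
def RegAbs {X : Type*} [Fintype X] [Nonempty X] (T : (X → ℝ) → (X → ℝ)) : Prop :=
  (XRA T).Nonempty ∧ ∀ x : X, x ∉ XRA T → ∃ n : ℕ, 0 < T^[n + 1] (ind (XRA T)) x

/-- The set `𝒳_1A := {x : min T̄ 𝟙ₓ > 0}`. -/
noncomputable def X1A {X : Type*} [Fintype X] [Nonempty X]
    (T : (X → ℝ) → (X → ℝ)) : Set X :=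
  {x : X | 0 < minf (conjOp T (ind {x}))}

/-- A 1-step absorbing lower transition operator. -/
def OneStepAbs {X : Type*} [Fintype X] [Nonempty X] (T : (X → ℝ) → (X → ℝ)) : Prop :=
  (X1A T).Nonempty ∧ ∀ x : X, x ∉ X1A T → 0 < T (ind (X1A T)) x

/-- The operator (sup) norm of a non-negatively homogeneous operator. -/
noncomputable def opN {X : Type*} [Fintype X] (Q : (X → ℝ) → (X → ℝ)) : ℝ :=
  sSup {r : ℝ | ∃ f : X → ℝ, ‖f‖ = 1 ∧ r = ‖Q f‖}



section AuxLemmas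
set_option linter.unusedSectionVars false
end AuxLemmas

set_option linter.unusedSectionVars false

section QBasic

variable {X : Type*} [Fintype X] [Nonempty X] {Q : (X → ℝ) → (X → ℝ)}

lemma ind_apply (A : Set X) (x : X) [Decidable (x ∈ A)] :
    ind A x = if x ∈ A then 1 else 0 := by
  simp [ind, Set.indicator_apply]

lemma ind_nonneg (A : Set X) (x : X) : 0 ≤ ind A x := by
  classical rw [ind_apply]; split <;> norm_num

lemma ind_le_one (A : Set X) (x : X) : ind A x ≤ 1 := by
  classical rw [ind_apply]; split <;> norm_num

lemma ind_mem {A : Set X} {x : X} (h : x ∈ A) : ind A x = 1 := by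
  classical rw [ind_apply]; simp [h]

lemma ind_not_mem {A : Set X} {x : X} (h : x ∉ A) : ind A x = 0 := by
  classical rw [ind_apply]; simp [h]

lemma ind_mono {A B : Set X} (h : A ⊆ B) (x : X) : ind A x ≤ ind B x := by
  classical
  rw [ind_apply, ind_apply]
  by_cases hx : x ∈ A
  · simp [hx, h hx]
  · simp [hx]; split <;> norm_num

lemma q_zero (hQ : IsLTRO Q) : Q 0 = 0 := hQ.1 0

lemma q_add_const (hQ : IsLTRO Q) (f : X → ℝ) (μ : ℝ) :
    Q (f + fun _ => μ) = Q f := by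
  have h1 := hQ.2.1 f (fun _ => μ)
  have h2 := hQ.2.1 (f + fun _ => μ) (fun _ => -μ)
  rw [hQ.1 μ, add_zero] at h1
  rw [hQ.1 (-μ), add_zero] at h2
  have e : ((f + fun _ => μ) + fun _ => -μ) = f := by funext x; simp
  rw [e] at h2
  exact le_antisymm h2 h1

lemma q_sum (hQ : IsLTRO Q) {ι : Type*} (s : Finset ι) (g : ι → X → ℝ) :
    ∑ i ∈ s, Q (g i) ≤ Q (∑ i ∈ s, g i) := by
  classical
  induction s using Finset.induction with
  | empty => simp [q_zero hQ]
  | insert _ _ h ih =>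
      rw [Finset.sum_insert h, Finset.sum_insert h]
      calc Q (g _) + ∑ i ∈ _, Q (g i) ≤ Q (g _) + Q (∑ i ∈ _, g i) :=
            add_le_add_right ih _
        _ ≤ _ := hQ.2.1 _ _

lemma decomp (g : X → ℝ) : (∑ y : X, g y • ind {y}) = g := by
  classical
  funext x
  rw [Finset.sum_apply]
  have : ∀ y : X, (g y • ind {y}) x = if x = y then g y else 0 := by
    intro y
    simp [ind, Set.indicator_apply, Set.mem_singleton_iff, Pi.single_apply]
  simp only [this]
  simp

lemma q_nonneg_at (hQ : IsLTRO Q) {h : X → ℝ} (hh : ∀ y, 0 ≤ h y) {x : X}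
    (hx : h x = 0) : 0 ≤ Q h x := by
  classical
  have hs := q_sum hQ Finset.univ (fun y => h y • ind {y})
  rw [decomp h] at hs
  have hs' : (∑ y : X, h y • Q (ind {y})) ≤ Q h := by
    refine le_trans (le_of_eq ?_) hs
    exact Finset.sum_congr rfl fun y _ => (hQ.2.2.1 (h y) (hh y) (ind {y})).symm
  have hx' : 0 ≤ ∑ y : X, (h y • Q (ind {y})) x := by
    apply Finset.sum_nonneg
    intro y _
    by_cases hxy : x = y
    · subst hxy; simp [hx]
    · exact mul_nonneg (hh y) (hQ.2.2.2 x y hxy)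
  calc (0:ℝ) ≤ ∑ y : X, (h y • Q (ind {y})) x := hx'
    _ = (∑ y : X, h y • Q (ind {y})) x := by rw [Finset.sum_apply]
    _ ≤ Q h x := hs' x

/-- The constant `c` bounding the diagonal rates from below. -/
noncomputable def cQ (Q : (X → ℝ) → (X → ℝ)) : ℝ :=
  maxf (fun x : X => -(Q (ind {x}) x)) ⊔ 0

lemma cQ_nonneg : 0 ≤ cQ Q := le_max_right _ _

lemma q_ind_self_ge (x : X) : -(cQ Q) ≤ Q (ind {x}) x := by
  have h1 : -(Q (ind {x}) x) ≤ maxf (fun x : X => -(Q (ind {x}) x)) := by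
    unfold maxf
    exact Finset.le_sup' (fun x : X => -(Q (ind {x}) x)) (Finset.mem_univ x)
  have h2 : maxf (fun x : X => -(Q (ind {x}) x)) ≤ cQ Q := le_max_left _ _
  linarith

lemma q_ge_neg_c (hQ : IsLTRO Q) {g : X → ℝ} (hg : ∀ y, 0 ≤ g y) (x : X) :
    -(cQ Q) * g x ≤ Q g x := by
  classical
  have hs := q_sum hQ Finset.univ (fun y => g y • ind {y})
  rw [decomp g] at hs
  have hs' : (∑ y : X, g y • Q (ind {y})) ≤ Q g := by
    refine le_trans (le_of_eq ?_) hs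
    exact Finset.sum_congr rfl fun y _ => (hQ.2.2.1 (g y) (hg y) (ind {y})).symm
  have key : -(cQ Q) * g x ≤ ∑ y : X, (g y • Q (ind {y})) x := by
    have hsplit : ∑ y : X, (g y • Q (ind {y})) x
        = (∑ y ∈ Finset.univ.erase x, (g y • Q (ind {y})) x) + (g x • Q (ind {x})) x := by
      rw [Finset.sum_erase_add _ _ (Finset.mem_univ x)]
    rw [hsplit]
    have h1 : 0 ≤ ∑ y ∈ Finset.univ.erase x, (g y • Q (ind {y})) x := by
      apply Finset.sum_nonneg
      intro y hy
      have hxy : x ≠ y := fun h => (Finset.mem_erase.mp hy).1 h.symm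
      exact mul_nonneg (hg y) (hQ.2.2.2 x y hxy)
    have h2 : -(cQ Q) * g x ≤ (g x • Q (ind {x})) x := by
      have := mul_le_mul_of_nonneg_left (q_ind_self_ge (Q := Q) x) (hg x)
      simpa [mul_comm] using this
    linarith
  calc -(cQ Q) * g x ≤ ∑ y : X, (g y • Q (ind {y})) x := key
    _ = (∑ y : X, g y • Q (ind {y})) x := by rw [Finset.sum_apply]
    _ ≤ Q g x := hs' x

lemma q_le_qbar (hQ : IsLTRO Q) (g : X → ℝ) (x : X) : Q g x ≤ conjOp Q g x := by
  have h := hQ.2.1 g (-g)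
  rw [add_neg_cancel, q_zero hQ] at h
  have := h x
  simp only [Pi.add_apply, Pi.zero_apply] at this
  simp only [conjOp, Pi.neg_apply]
  linarith

lemma q_sub_le_qbar (hQ : IsLTRO Q) (u v : X → ℝ) (x : X) :
    Q u x - Q v x ≤ conjOp Q (u - v) x := by
  have h := hQ.2.1 u (v - u)
  rw [add_sub_cancel] at h
  have := h x
  simp only [Pi.add_apply] at this
  simp only [conjOp, Pi.neg_apply, neg_sub]
  linarith

lemma qbar_argmax_nonpos (hQ : IsLTRO Q) {g : X → ℝ} {x : X}
    (hx : ∀ y, g y ≤ g x) : conjOp Q g x ≤ 0 := by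
  have key : 0 ≤ Q (-g) x := by
    have e : (-g : X → ℝ) = (fun y => g x - g y) + fun _ => -(g x) := by
      funext y; simp; ring
    rw [e, q_add_const hQ]
    exact q_nonneg_at hQ (fun y => by simp [sub_nonneg.2 (hx y)]) (by simp)
  simp only [conjOp, Pi.neg_apply]
  linarith

lemma q_le_of_dom (hQ : IsLTRO Q) {g d : X → ℝ} (hgd : ∀ z, g z ≤ d z) {y : X}
    (hy : g y = d y) : Q g y ≤ Q d y := by
  have h := hQ.2.1 g (d - g)
  have e : g + (d - g) = d := by abel
  rw [e] at h
  have h2 : 0 ≤ Q (d - g) y :=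
    q_nonneg_at hQ (fun z => by simpa using sub_nonneg.2 (hgd z)) (by simp [hy])
  have := h y
  simp only [Pi.add_apply] at this
  linarith

lemma qbar_le_of_dom (hQ : IsLTRO Q) {g d : X → ℝ} (hgd : ∀ z, g z ≤ d z) {y : X}
    (hy : g y = d y) : conjOp Q g y ≤ conjOp Q d y := by
  have := q_le_of_dom hQ (g := -d) (d := -g) (fun z => by simpa using hgd z)
    (y := y) (by simp [hy])
  simp only [conjOp, Pi.neg_apply]
  linarith

lemma qbar_smul (hQ : IsLTRO Q) {l : ℝ} (hl : 0 ≤ l) (g : X → ℝ) :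
    conjOp Q (l • g) = l • conjOp Q g := by
  simp only [conjOp]
  rw [show -(l • g) = l • (-g) by module, hQ.2.2.1 l hl]
  funext x; simp

lemma qbar_add_const (hQ : IsLTRO Q) (f : X → ℝ) (μ : ℝ) :
    conjOp Q (f + fun _ => μ) = conjOp Q f := by
  simp only [conjOp]
  rw [show -(f + fun _ => μ) = (-f) + fun _ => -μ by funext x; simp; ring,
    q_add_const hQ]

lemma qbar_sum (hQ : IsLTRO Q) {ι : Type*} (s : Finset ι) (g : ι → X → ℝ) :
    conjOp Q (∑ i ∈ s, g i) ≤ ∑ i ∈ s, conjOp Q (g i) := by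
  have := q_sum hQ s (fun i => -(g i))
  have e : (∑ i ∈ s, -(g i)) = -(∑ i ∈ s, g i) := by
    simp [Finset.sum_neg_distrib]
  rw [e] at this
  intro x
  have h := this x
  rw [Finset.sum_apply] at h
  simp only [conjOp, Finset.sum_apply, Pi.neg_apply]
  have : ∑ i ∈ s, -((Q (-(g i))) x) = -(∑ i ∈ s, (Q (-(g i))) x) := by
    rw [Finset.sum_neg_distrib]
  rw [this]
  linarith

end QBasic

section MaxMin

variable {X : Type*} [Fintype X] [Nonempty X]

lemma le_maxf (f : X → ℝ) (x : X) : f x ≤ maxf f :=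
  Finset.le_sup' f (Finset.mem_univ x)

lemma maxf_le {f : X → ℝ} {b : ℝ} (h : ∀ x, f x ≤ b) : maxf f ≤ b :=
  Finset.sup'_le _ f fun x _ => h x

lemma exists_maxf (f : X → ℝ) : ∃ x, f x = maxf f ∧ ∀ y, f y ≤ f x := by
  obtain ⟨x, -, hx⟩ := Finset.exists_max_image Finset.univ f Finset.univ_nonempty
  exact ⟨x, le_antisymm (le_maxf f x) (maxf_le fun y => hx y (Finset.mem_univ y)),
    fun y => hx y (Finset.mem_univ y)⟩

lemma minf_le (f : X → ℝ) (x : X) : minf f ≤ f x :=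
  Finset.inf'_le f (Finset.mem_univ x)

lemma le_minf {f : X → ℝ} {b : ℝ} (h : ∀ x, b ≤ f x) : b ≤ minf f :=
  Finset.le_inf' _ f fun x _ => h x

lemma exists_minf (f : X → ℝ) : ∃ x, f x = minf f ∧ ∀ y, f x ≤ f y := by
  obtain ⟨x, -, hx⟩ := Finset.exists_min_image Finset.univ f Finset.univ_nonempty
  exact ⟨x, le_antisymm (le_minf fun y => hx y (Finset.mem_univ y)) (minf_le f x),
    fun y => hx y (Finset.mem_univ y)⟩

lemma minf_le_maxf (f : X → ℝ) : minf f ≤ maxf f := by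
  have x := Classical.arbitrary X
  exact le_trans (minf_le f x) (le_maxf f x)

end MaxMin

section Core

open Set

lemma continuousOn_sup' {ι : Type*} {S : Finset ι} (hS : S.Nonempty) {s : Set ℝ}
    {u : ι → ℝ → ℝ} (h : ∀ i ∈ S, ContinuousOn (u i) s) :
    ContinuousOn (fun t => S.sup' hS (fun i => u i t)) s := by
  induction hS using Finset.Nonempty.cons_induction with
  | singleton a =>
      simp only [Finset.sup'_singleton]
      exact h a (Finset.mem_singleton_self a)
  | cons a s' ha hs ih =>
      have e : ∀ t, (Finset.cons a s' ha).sup' (Finset.cons_nonempty ha) (fun i => u i t)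
          = u a t ⊔ s'.sup' hs (fun i => u i t) := fun t => Finset.sup'_cons hs (fun i => u i t)
      simp only [e]
      exact ContinuousOn.sup (h a (by simp)) (ih fun i hi => h i (by simp [hi]))

/-- The key lemma: a finite max of differentiable functions whose derivative is
nonpositive at every argmax is antitone on `[0, ∞)`. -/
lemma sup'_antitone {ι : Type*} {S : Finset ι} (hS : S.Nonempty)
    (u : ι → ℝ → ℝ) (d : ι → ℝ → ℝ)
    (hu : ∀ i ∈ S, ∀ t ∈ Set.Ici (0:ℝ), HasDerivWithinAt (u i) (d i t) (Set.Ici 0) t)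
    (hd : ∀ t ∈ Set.Ici (0:ℝ), ∀ i ∈ S, (∀ j ∈ S, u j t ≤ u i t) → d i t ≤ 0)
    {a b : ℝ} (ha : 0 ≤ a) (hab : a ≤ b) :
    S.sup' hS (fun i => u i b) ≤ S.sup' hS (fun i => u i a) := by
  set F : ℝ → ℝ := fun t => S.sup' hS (fun i => u i t) with hF_def
  have hcont : ∀ i ∈ S, ContinuousOn (u i) (Set.Ici (0:ℝ)) := fun i hi t ht =>
    (hu i hi t ht).continuousWithinAt
  have hFc : ContinuousOn F (Set.Icc a b) :=
    (continuousOn_sup' hS hcont).mono (Set.Icc_subset_Ici_self.trans (Set.Ici_subset_Ici.2 ha))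
  -- main estimate with ε
  have key : ∀ ε : ℝ, 0 < ε → F b ≤ F a + ε * (b - a) := by
    intro ε hε
    have hmain := image_le_of_liminf_slope_right_lt_deriv_boundary'
      (f := F) (f' := fun _ => 0) (a := a) (b := b) hFc
      ?_ (B := fun t => F a + ε * (t - a)) (B' := fun _ => ε) (by simp) ?_ ?_ ?_
    · have := hmain (x := b) ⟨hab, le_rfl⟩
      simpa using this
    · -- slope condition
      intro x hx r hr
      have hx0 : (0:ℝ) ≤ x := le_trans ha hx.1
      obtain ⟨i0, hi0S, hi0⟩ := Finset.exists_max_image S (fun i => u i x) hS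
      have hIoi : Set.Ioi x ⊆ Set.Ici (0:ℝ) := fun z hz => le_trans hx0 (le_of_lt hz)
      -- eventually facts
      have ev1 : ∀ i ∈ S, u i x = u i0 x → ∀ᶠ z in nhdsWithin x (Set.Ioi x),
          slope (u i) x z < r := by
        intro i hiS hieq
        have hargmax : ∀ j ∈ S, u j x ≤ u i x := fun j hj => (hi0 j hj).trans hieq.ge
        have hdix : d i x ≤ 0 := hd x hx0 i hiS hargmax
        have hderiv : HasDerivWithinAt (u i) (d i x) (Set.Ioi x) x :=
          ((hu i hiS x hx0).mono (Set.Ici_subset_Ici.mpr hx0)).Ioi_of_Ici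
        have := (hasDerivWithinAt_iff_tendsto_slope' (lt_irrefl x)).1 hderiv
        exact this.eventually_lt_const (lt_of_le_of_lt hdix hr)
      have ev2 : ∀ i ∈ S, u i x < u i0 x → ∀ᶠ z in nhdsWithin x (Set.Ioi x),
          u i z < u i0 z := by
        intro i hiS hilt
        have h1 : Filter.Tendsto (u i) (nhdsWithin x (Set.Ioi x)) (nhds (u i x)) :=
          (hcont i hiS x hx0).mono_left (nhdsWithin_mono x hIoi)
        have h2 : Filter.Tendsto (u i0) (nhdsWithin x (Set.Ioi x)) (nhds (u i0 x)) :=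
          (hcont i0 hi0S x hx0).mono_left (nhdsWithin_mono x hIoi)
        exact h1.eventually_lt h2 hilt
      have evAll : ∀ᶠ z in nhdsWithin x (Set.Ioi x),
          (∀ i ∈ S, (u i x = u i0 x → slope (u i) x z < r) ∧
            (u i x < u i0 x → u i z < u i0 z)) ∧ z ∈ Set.Ioi x := by
        refine Filter.Eventually.and ?_ self_mem_nhdsWithin
        rw [Filter.eventually_all_finset]
        intro i hi
        by_cases hcase : u i x = u i0 x
        · exact ((ev1 i hi hcase).mono fun z hz => ⟨fun _ => hz, fun hlt => absurd hcase hlt.ne⟩)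
        · have hlt : u i x < u i0 x := lt_of_le_of_ne (hi0 i hi) hcase
          exact ((ev2 i hi hlt).mono fun z hz => ⟨fun he => absurd he hcase, fun _ => hz⟩)
      refine Filter.Eventually.frequently (evAll.mono ?_)
      rintro z ⟨hz, hzx⟩
      obtain ⟨j, hjS, hj⟩ := Finset.exists_max_image S (fun i => u i z) hS
      have hFz : F z = u j z := le_antisymm (Finset.sup'_le _ _ fun i hi => hj i hi)
        (Finset.le_sup' (fun i => u i z) hjS)
      have hjx : u j x = u i0 x := by
        by_contra hne
        have hlt := lt_of_le_of_ne (hi0 j hjS) hne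
        have := (hz j hjS).2 hlt
        exact absurd (hj i0 hi0S) (not_le.2 this)
      have hslope := (hz j hjS).1 hjx
      have hFx : u j x ≤ F x := Finset.le_sup' (fun i => u i x) hjS
      rw [slope_def_field] at hslope ⊢
      have hzx' : 0 < z - x := sub_pos.2 hzx
      have hnum : F z - F x ≤ u j z - u j x := by
        rw [hFz]; linarith
      calc (F z - F x) / (z - x) ≤ (u j z - u j x) / (z - x) :=
            by gcongr
        _ < r := hslope
    · exact (Continuous.continuousOn (by continuity))
    · intro x _
      have : HasDerivWithinAt (fun t => F a + ε * (t - a)) (ε * 1) (Set.Ici x) x :=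
        (((hasDerivWithinAt_id x (Set.Ici x)).sub_const a).const_mul ε).const_add (F a)
      simpa using this
    · intro x _ _
      exact hε
  -- conclude
  by_contra hcon
  push_neg at hcon
  have hba : 0 ≤ b - a := sub_nonneg.2 hab
  set δ := F b - F a with hδ
  have hδpos : 0 < δ := sub_pos.2 hcon
  have := key (δ / (b - a + 1)) (by positivity)
  have hlt : δ / (b - a + 1) * (b - a) < δ := by
    rw [div_mul_eq_mul_div, div_lt_iff₀ (by linarith)]
    nlinarith
  linarith

end Core

section Sol

open Set

variable {X : Type*} [Fintype X] [Nonempty X] {Q : (X → ℝ) → (X → ℝ)}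
  {T : ℝ → (X → ℝ) → (X → ℝ)}

lemma hD (hT : IsSol Q T) (f : X → ℝ) (x : X) {t : ℝ} (ht : 0 ≤ t) :
    HasDerivWithinAt (fun s => T s f x) (Q (T t f) x) (Set.Ici 0) t := by
  have h := hT.2 f t ht
  have := (ContinuousLinearMap.proj (R := ℝ) (φ := fun _ : X => ℝ)
    x).hasFDerivAt.comp_hasDerivWithinAt t h
  exact this

lemma T_contOn (hT : IsSol Q T) (f : X → ℝ) (x : X) :
    ContinuousOn (fun s => T s f x) (Set.Ici 0) :=
  fun t ht => (hD hT f x ht).continuousWithinAt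

/-- The fundamental comparison principle. -/
lemma comp_le (hQ : IsLTRO Q) (u v : ℝ → X → ℝ) (du dv : ℝ → X → ℝ)
    (hu : ∀ x, ∀ t : ℝ, 0 ≤ t → HasDerivWithinAt (fun s => u s x) (du t x) (Set.Ici 0) t)
    (hv : ∀ x, ∀ t : ℝ, 0 ≤ t → HasDerivWithinAt (fun s => v s x) (dv t x) (Set.Ici 0) t)
    (hdu : ∀ t : ℝ, 0 ≤ t → ∀ x, du t x ≤ Q (u t) x)
    (hdv : ∀ t : ℝ, 0 ≤ t → ∀ x, Q (v t) x ≤ dv t x)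
    (h0 : ∀ x, u 0 x ≤ v 0 x) {t : ℝ} (ht : 0 ≤ t) :
    ∀ x, u t x ≤ v t x := by
  intro x
  have key := sup'_antitone (ι := X) (S := Finset.univ) Finset.univ_nonempty
    (fun i s => u s i - v s i) (fun i s => du s i - dv s i)
    (fun i _ s hs => ((hu i s hs).sub (hv i s hs)))
    ?_ (le_refl (0:ℝ)) ht
  · have h1 : u t x - v t x ≤ Finset.univ.sup' Finset.univ_nonempty (fun i => u t i - v t i) :=
      Finset.le_sup' (fun i => u t i - v t i) (Finset.mem_univ x)
    have h2 : Finset.univ.sup' Finset.univ_nonempty (fun i => u 0 i - v 0 i) ≤ 0 :=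
      Finset.sup'_le _ _ fun i _ => sub_nonpos.2 (h0 i)
    linarith
  · intro s hs i _ hi
    show du s i - dv s i ≤ 0
    have hq1 : Q (u s) i - Q (v s) i ≤ conjOp Q (u s - v s) i := q_sub_le_qbar hQ _ _ i
    have hq2 : conjOp Q (u s - v s) i ≤ 0 := by
      apply qbar_argmax_nonpos hQ
      intro y
      have : u s y - v s y ≤ u s i - v s i := hi y (Finset.mem_univ y)
      simpa using this
    have h1 := hdu s hs i
    have h2 := hdv s hs i
    linarith

/-- Uniqueness of solutions of the ODE. -/
lemma sol_eq (hQ : IsLTRO Q) (hT : IsSol Q T) {u : ℝ → X → ℝ}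
    (hu : ∀ x, ∀ t : ℝ, 0 ≤ t → HasDerivWithinAt (fun s => u s x) (Q (u t) x) (Set.Ici 0) t)
    {f : X → ℝ} (h0 : u 0 = f) {t : ℝ} (ht : 0 ≤ t) : u t = T t f := by
  have h1 := comp_le hQ u (fun s => T s f) (fun t => Q (u t)) (fun t => Q (T t f))
    hu (fun x t ht => hD hT f x ht) (fun _ _ x => le_rfl) (fun _ _ x => le_rfl)
    (fun x => by show u 0 x ≤ T 0 f x; rw [h0, hT.1 f]) ht
  have h2 := comp_le hQ (fun s => T s f) u (fun t => Q (T t f)) (fun t => Q (u t))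
    (fun x t ht => hD hT f x ht) hu (fun _ _ x => le_rfl) (fun _ _ x => le_rfl)
    (fun x => by show T 0 f x ≤ u 0 x; rw [h0, hT.1 f]) ht
  funext x
  exact le_antisymm (h1 x) (h2 x)

lemma T_mono (hQ : IsLTRO Q) (hT : IsSol Q T) {f g : X → ℝ} (hfg : ∀ x, f x ≤ g x)
    {t : ℝ} (ht : 0 ≤ t) : ∀ x, T t f x ≤ T t g x :=
  comp_le hQ (fun s => T s f) (fun s => T s g) (fun t => Q (T t f)) (fun t => Q (T t g))
    (fun x t ht => hD hT f x ht) (fun x t ht => hD hT g x ht)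
    (fun _ _ _ => le_rfl) (fun _ _ _ => le_rfl)
    (fun x => by show T 0 f x ≤ T 0 g x; rw [hT.1 f, hT.1 g]; exact hfg x) ht

lemma T_const (hQ : IsLTRO Q) (hT : IsSol Q T) (μ : ℝ) {t : ℝ} (ht : 0 ≤ t) :
    T t (fun _ => μ) = fun _ => μ := by
  refine (sol_eq hQ hT (u := fun _ _ => μ) ?_ rfl ht).symm
  intro x t' _
  rw [hQ.1 μ]
  exact hasDerivWithinAt_const t' _ μ

lemma T_superadd (hQ : IsLTRO Q) (hT : IsSol Q T) (f g : X → ℝ) {t : ℝ} (ht : 0 ≤ t) :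
    ∀ x, T t f x + T t g x ≤ T t (f + g) x :=
  comp_le hQ (fun s => T s f + T s g) (fun s => T s (f + g))
    (fun t => Q (T t f) + Q (T t g)) (fun t => Q (T t (f + g)))
    (fun x t ht => by
      have := (hD hT f x ht).add (hD hT g x ht)
      exact this)
    (fun x t ht => hD hT (f + g) x ht)
    (fun t ht x => by have := hQ.2.1 (T t f) (T t g) x; simpa using this)
    (fun _ _ _ => le_rfl)
    (fun x => by show T 0 f x + T 0 g x ≤ T 0 (f+g) x; rw [hT.1 f, hT.1 g, hT.1 (f + g)]; rfl) ht

lemma T_smul (hQ : IsLTRO Q) (hT : IsSol Q T) {l : ℝ} (hl : 0 ≤ l) (f : X → ℝ)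
    {t : ℝ} (ht : 0 ≤ t) : T t (l • f) = l • T t f := by
  refine (sol_eq hQ hT (u := fun s => l • T s f) ?_ (by show l • T 0 f = l • f; rw [hT.1 f]) ht).symm
  intro x t' ht'
  rw [hQ.2.2.1 l hl]
  have := (hD hT f x ht').const_mul l
  simpa using this

lemma T_add_const (hQ : IsLTRO Q) (hT : IsSol Q T) (f : X → ℝ) (μ : ℝ) {t : ℝ} (ht : 0 ≤ t) :
    T t (f + fun _ => μ) = T t f + fun _ => μ := by
  refine (sol_eq hQ hT (u := fun s => T s f + fun _ => μ) ?_ (by show T 0 f + (fun _ => μ) = f + fun _ => μ; rw [hT.1 f]) ht).symm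
  intro x t' ht'
  rw [q_add_const hQ]
  have := (hD hT f x ht').add_const μ
  simpa using this

lemma T_semigroup (hQ : IsLTRO Q) (hT : IsSol Q T) (f : X → ℝ) {t s : ℝ}
    (ht : 0 ≤ t) (hs : 0 ≤ s) : T (t + s) f = T t (T s f) := by
  refine sol_eq hQ hT (u := fun r => T (r + s) f) ?_ (by show T (0+s) f = T s f; rw [zero_add]) ht
  intro x t' ht'
  have houter := hD hT f x (t := t' + s) (by linarith)
  have hinner : HasDerivWithinAt (fun r : ℝ => r + s) 1 (Set.Ici 0) t' :=
    (hasDerivWithinAt_id t' _).add_const s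
  have hmaps : Set.MapsTo (fun r : ℝ => r + s) (Set.Ici 0) (Set.Ici 0) :=
    fun r hr => by simp only [Set.mem_Ici] at *; linarith
  have := houter.comp t' hinner hmaps
  rw [mul_one] at this
  exact this

lemma T_le_max (hQ : IsLTRO Q) (hT : IsSol Q T) (f : X → ℝ) {t : ℝ} (ht : 0 ≤ t) (x : X) :
    T t f x ≤ maxf f := by
  have h := T_mono hQ hT (g := fun _ => maxf f) (fun y => le_maxf f y) ht x
  rwa [T_const hQ hT _ ht] at h

lemma min_le_T (hQ : IsLTRO Q) (hT : IsSol Q T) (f : X → ℝ) {t : ℝ} (ht : 0 ≤ t) (x : X) :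
    minf f ≤ T t f x := by
  have h := T_mono hQ hT (f := fun _ => minf f) (fun y => minf_le f y) ht x
  rwa [T_const hQ hT _ ht] at h

lemma T_nonneg (hQ : IsLTRO Q) (hT : IsSol Q T) {f : X → ℝ} (hf : ∀ y, 0 ≤ f y)
    {t : ℝ} (ht : 0 ≤ t) (x : X) : 0 ≤ T t f x :=
  le_trans (le_minf hf) (min_le_T hQ hT f ht x)

end Sol

section MaxMin2

variable {X : Type*} [Fintype X] [Nonempty X]

lemma minf_neg (f : X → ℝ) : minf (-f) = -maxf f := by
  obtain ⟨x, hx, hmax⟩ := exists_maxf f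
  refine le_antisymm ?_ (le_minf fun y => by simpa using le_maxf f y)
  calc minf (-f) ≤ -f x := minf_le (-f) x
    _ = -maxf f := by rw [hx]

lemma maxf_neg (f : X → ℝ) : maxf (-f) = -minf f := by
  have := minf_neg (-f)
  rw [neg_neg] at this
  linarith

end MaxMin2

section Conj

open Set

variable {X : Type*} [Fintype X] [Nonempty X] {Q : (X → ℝ) → (X → ℝ)}
  {T : ℝ → (X → ℝ) → (X → ℝ)}

lemma T_le_Tb (hQ : IsLTRO Q) (hT : IsSol Q T) (f : X → ℝ) {t : ℝ} (ht : 0 ≤ t) (x : X) :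
    T t f x ≤ conjOp (T t) f x := by
  have h := T_superadd hQ hT f (-f) ht x
  rw [show f + -f = (fun _ => (0:ℝ)) by funext y; simp] at h
  rw [T_const hQ hT 0 ht] at h
  have h' : T t f x + T t (-f) x ≤ 0 := h
  simp only [conjOp, Pi.neg_apply]
  linarith

lemma Tb_mono (hQ : IsLTRO Q) (hT : IsSol Q T) {f g : X → ℝ} (hfg : ∀ x, f x ≤ g x)
    {t : ℝ} (ht : 0 ≤ t) : ∀ x, conjOp (T t) f x ≤ conjOp (T t) g x := by
  intro x
  have := T_mono hQ hT (f := -g) (g := -f) (fun y => by simp [hfg y]) ht x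
  simp only [conjOp, Pi.neg_apply]
  linarith

lemma Tb_smul (hQ : IsLTRO Q) (hT : IsSol Q T) {l : ℝ} (hl : 0 ≤ l) (f : X → ℝ)
    {t : ℝ} (ht : 0 ≤ t) : conjOp (T t) (l • f) = l • conjOp (T t) f := by
  simp only [conjOp]
  rw [show -(l • f) = l • (-f) by module, T_smul hQ hT hl _ ht]
  funext x; simp

lemma Tb_semigroup (hQ : IsLTRO Q) (hT : IsSol Q T) (f : X → ℝ) {t s : ℝ}
    (ht : 0 ≤ t) (hs : 0 ≤ s) :
    conjOp (T (t + s)) f = conjOp (T t) (conjOp (T s) f) := by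
  simp only [conjOp, neg_neg]
  rw [T_semigroup hQ hT (-f) ht hs]

lemma Tb_le_max (hQ : IsLTRO Q) (hT : IsSol Q T) (f : X → ℝ) {t : ℝ} (ht : 0 ≤ t) (x : X) :
    conjOp (T t) f x ≤ maxf f := by
  have h := min_le_T hQ hT (-f) ht x
  rw [minf_neg] at h
  simp only [conjOp, Pi.neg_apply]
  linarith

lemma T_add_Tb_le (hQ : IsLTRO Q) (hT : IsSol Q T) (f g : X → ℝ) {t : ℝ} (ht : 0 ≤ t)
    (x : X) : T t f x + conjOp (T t) g x ≤ conjOp (T t) (f + g) x := by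
  have h := T_superadd hQ hT (-(f + g)) f ht x
  rw [show -(f + g) + f = -g by module] at h
  simp only [conjOp, Pi.neg_apply, Pi.add_apply] at *
  linarith

lemma Tb_one (hQ : IsLTRO Q) (hT : IsSol Q T) {t : ℝ} (ht : 0 ≤ t) (x : X) :
    conjOp (T t) (fun _ => 1) x = 1 := by
  simp only [conjOp]
  rw [show -(fun _ : X => (1:ℝ)) = (fun _ : X => (-1:ℝ)) by funext y; simp,
    T_const hQ hT (-1) ht]
  simp

/-- Exponential lower bound: `T_t f ≥ e^{-ct} f` for nonnegative `f`. -/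
lemma T_exp (hQ : IsLTRO Q) (hT : IsSol Q T) {f : X → ℝ} (hf : ∀ y, 0 ≤ f y)
    {t : ℝ} (ht : 0 ≤ t) (x : X) :
    Real.exp (-(cQ Q * t)) * f x ≤ T t f x := by
  set c := cQ Q with hc
  have key := sup'_antitone (ι := X) (S := {x}) (Finset.singleton_nonempty x)
    (fun i s => f i - Real.exp (c * s) * T s f i)
    (fun i s => -(Real.exp (c * s) * (c * T s f i + Q (T s f) i)))
    ?_ ?_ le_rfl ht
  · have key' : f x - Real.exp (c * t) * T t f x ≤ f x - Real.exp (c * 0) * T 0 f x := by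
      rw [Finset.sup'_singleton, Finset.sup'_singleton] at key
      exact key
    have h0 : f x - Real.exp (c * 0) * T 0 f x = 0 := by
      rw [hT.1 f]; simp
    rw [h0] at key'
    have key := key'
    have hepos : (0:ℝ) < Real.exp (c * t) := Real.exp_pos _
    have h1 : f x ≤ Real.exp (c * t) * T t f x := by linarith
    rw [show -(c * t) = -(c * t) by rfl, Real.exp_neg]
    rw [inv_mul_le_iff₀ hepos]
    linarith [h1, mul_comm (Real.exp (c * t)) (T t f x)]
  · intro i _ s hs
    have hexp : HasDerivWithinAt (fun r : ℝ => Real.exp (c * r)) (Real.exp (c * s) * c)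
        (Set.Ici 0) s := by
      have := ((hasDerivWithinAt_id s (Set.Ici (0:ℝ))).const_mul c).exp
      simpa using this
    have hmul := hexp.mul (hD hT f i (t := s) hs)
    have := hmul.const_sub (f i)
    exact this.congr_deriv (by ring)
  · intro s hs i _ _
    have hTnn : ∀ y, 0 ≤ T s f y := fun y => T_nonneg hQ hT hf hs y
    have hq := q_ge_neg_c hQ (g := T s f) hTnn i
    have hepos : (0:ℝ) < Real.exp (c * s) := Real.exp_pos _
    have hsum : 0 ≤ c * T s f i + Q (T s f) i := by linarith
    have := mul_nonneg hepos.le hsum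
    show -(Real.exp (c * s) * (c * T s f i + Q (T s f) i)) ≤ 0
    linarith

lemma Tb_exp (hQ : IsLTRO Q) (hT : IsSol Q T) {f : X → ℝ} (hf : ∀ y, 0 ≤ f y)
    {t : ℝ} (ht : 0 ≤ t) (x : X) :
    Real.exp (-(cQ Q * t)) * f x ≤ conjOp (T t) f x :=
  le_trans (T_exp hQ hT hf ht x) (T_le_Tb hQ hT f ht x)

lemma Tb_nonneg (hQ : IsLTRO Q) (hT : IsSol Q T) {f : X → ℝ} (hf : ∀ y, 0 ≤ f y)
    {t : ℝ} (ht : 0 ≤ t) (x : X) : 0 ≤ conjOp (T t) f x :=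
  le_trans (T_nonneg hQ hT hf ht x) (T_le_Tb hQ hT f ht x)

/-- If a function vanishes at `0` and has positive right derivative, it is positive
at some arbitrarily small positive time. -/
lemma deriv_pos_small {g : ℝ → ℝ} {d : ℝ} (hder : HasDerivWithinAt g d (Set.Ici 0) 0)
    (hg0 : g 0 = 0) (hd : 0 < d) {t : ℝ} (ht : 0 < t) :
    ∃ s, 0 < s ∧ s < t ∧ 0 < g s := by
  have h1 := hasDerivWithinAt_iff_tendsto_slope.1 hder
  rw [Set.Ici_sdiff_left] at h1
  have h2 : ∀ᶠ z in nhdsWithin (0:ℝ) (Set.Ioi 0), 0 < slope g 0 z :=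
    h1.eventually_const_lt hd
  have h3 : ∀ᶠ z in nhdsWithin (0:ℝ) (Set.Ioi 0), z ∈ Set.Ioo (0:ℝ) t :=
    Filter.eventually_of_mem (Ioo_mem_nhdsGT_of_mem ⟨le_rfl, ht⟩) (fun z hz => hz)
  obtain ⟨s, hs1, hs2⟩ := (h2.and h3).exists
  refine ⟨s, hs2.1, hs2.2, ?_⟩
  rw [slope_def_field, hg0, sub_zero, sub_zero] at hs1
  have := mul_pos hs1 hs2.1
  rwa [div_mul_cancel₀ _ (ne_of_gt hs2.1)] at this

end Conj

section Reach

open Set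

variable {X : Type*} [Fintype X] [Nonempty X] {Q : (X → ℝ) → (X → ℝ)}
  {T : ℝ → (X → ℝ) → (X → ℝ)}

lemma ind_eq_sum (A : Set X) : ind A = ∑ z ∈ (Set.toFinite A).toFinset, ind {z} := by
  classical
  funext x
  rw [Finset.sum_apply]
  have h : ∀ z : X, ind {z} x = if x = z then (1:ℝ) else 0 := fun z => by
    rw [ind_apply]; simp [Set.mem_singleton_iff]
  simp only [h]
  rw [Finset.sum_ite_eq]
  rw [ind_apply A x]
  simp only [Set.Finite.mem_toFinset]

lemma subset_lowerStep (A : Set X) : A ⊆ lowerStep Q A := Set.subset_union_left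

lemma iterate_lowerStep_mono {A : Set X} {m n : ℕ} (h : m ≤ n) :
    (lowerStep Q)^[m] A ⊆ (lowerStep Q)^[n] A := by
  induction n with
  | zero => rw [Nat.le_zero.1 h]
  | succ n ih =>
      rcases Nat.lt_or_ge m (n+1) with hm | hm
      · refine (ih (Nat.lt_succ_iff.1 hm)).trans ?_
        rw [Function.iterate_succ_apply']
        exact subset_lowerStep _
      · rw [Nat.le_antisymm (le_trans h (le_refl _)) hm]

lemma fix_propagate {A : Set X} {n : ℕ}
    (h : (lowerStep Q)^[n] A = (lowerStep Q)^[n+1] A) {m : ℕ} (hm : n ≤ m) :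
    (lowerStep Q)^[m] A = (lowerStep Q)^[n] A := by
  induction m with
  | zero => rw [Nat.le_zero.1 hm]
  | succ m ih =>
      rcases Nat.lt_or_ge n (m+1) with hn | hn
      · have hnm : n ≤ m := Nat.lt_succ_iff.1 hn
        rw [Function.iterate_succ_apply', ih hnm,
          show lowerStep Q ((lowerStep Q)^[n] A) = (lowerStep Q)^[n+1] A from
            (Function.iterate_succ_apply' _ _ _).symm, ← h]
      · rw [Nat.le_antisymm hn hm]

lemma exists_fix (Q : (X → ℝ) → (X → ℝ)) (A : Set X) :
    ∃ n : ℕ, (lowerStep Q)^[n] A = (lowerStep Q)^[n+1] A := by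
  by_contra hcon
  push_neg at hcon
  have hstrict : ∀ n : ℕ, n ≤ ((lowerStep Q)^[n] A).ncard := by
    intro n
    induction n with
    | zero => exact Nat.zero_le _
    | succ n ih =>
        have hss : (lowerStep Q)^[n] A ⊂ (lowerStep Q)^[n+1] A := by
          refine ⟨?_, fun hsub => hcon n (le_antisymm ?_ hsub)⟩
          · rw [Function.iterate_succ_apply']
            exact subset_lowerStep _
          · rw [Function.iterate_succ_apply']
            exact subset_lowerStep _
        have := Set.ncard_lt_ncard hss (Set.toFinite _)
        omega
  have h1 := hstrict (Fintype.card X + 1)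
  have h2 : ((lowerStep Q)^[Fintype.card X + 1] A).ncard ≤ Fintype.card X := by
    have := Set.ncard_le_ncard (Set.subset_univ ((lowerStep Q)^[Fintype.card X + 1] A))
      (Set.toFinite _)
    simpa [Set.ncard_univ, Nat.card_eq_fintype_card] using this
  omega

lemma lowerReach_iff (x : X) (A : Set X) :
    lowerReach Q x A ↔ ∃ m : ℕ, x ∈ (lowerStep Q)^[m] A := by
  constructor
  · rintro ⟨n, -, hx⟩; exact ⟨n, hx⟩
  · rintro ⟨m, hx⟩
    obtain ⟨n, hn⟩ := exists_fix Q A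
    refine ⟨n, hn, ?_⟩
    rcases le_or_gt m n with h | h
    · exact iterate_lowerStep_mono h hx
    · rw [← fix_propagate hn h.le]; exact hx

lemma lowerReach_of_mem {x : X} {A : Set X} (h : x ∈ A) : lowerReach Q x A :=
  (lowerReach_iff x A).2 ⟨0, h⟩

/-- LP1: lower reachability implies positivity of the lower transition probability. -/
lemma T_pos_of_lowerReach (hQ : IsLTRO Q) (hT : IsSol Q T) {x : X} {A : Set X}
    (h : lowerReach Q x A) {t : ℝ} (ht : 0 < t) : 0 < T t (ind A) x := by
  obtain ⟨m, hm⟩ := (lowerReach_iff x A).1 h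
  clear h
  induction m generalizing x t with
  | zero =>
      have hm' : x ∈ A := by simpa using hm
      have h1 := T_exp hQ hT (f := ind A) (fun y => ind_nonneg A y) ht.le x
      rw [ind_mem hm'] at h1
      calc (0:ℝ) < Real.exp (-(cQ Q * t)) * 1 := by positivity
        _ ≤ T t (ind A) x := h1
  | succ m ih =>
      rw [Function.iterate_succ_apply'] at hm
      rcases hm with hmem | ⟨hnot, hpos⟩
      · exact ih ht hmem
      · -- B := iterate m A, x ∉ B, 0 < Q (ind B) x
        set B := (lowerStep Q)^[m] A with hB
        -- small-time positivity of s ↦ T s (ind B) x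
        have hder : HasDerivWithinAt (fun s => T s (ind B) x) (Q (ind B) x) (Set.Ici 0) 0 := by
          have := hD hT (ind B) x (t := 0) le_rfl
          rwa [hT.1 (ind B)] at this
        have hG0 : T 0 (ind B) x = 0 := by rw [hT.1 (ind B)]; exact ind_not_mem hnot
        obtain ⟨s, hs0, hst, hGs⟩ := deriv_pos_small hder hG0 hpos ht
        -- B is nonempty
        have hBne : B.Nonempty := by
          rcases Set.eq_empty_or_nonempty B with hBe | hBne
          · exfalso
            rw [hBe] at hpos
            have : ind (∅ : Set X) = 0 := by funext z; exact ind_not_mem (Set.notMem_empty z)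
            rw [this, q_zero hQ] at hpos
            exact lt_irrefl 0 hpos
          · exact hBne
        -- ε = min of T (t-s) (ind A) over B
        set F := (Set.toFinite B).toFinset with hF
        have hFne : F.Nonempty := by
          rwa [hF, Set.Finite.toFinset_nonempty]
        set ε := F.inf' hFne (fun z => T (t - s) (ind A) z) with hε
        have hεpos : 0 < ε := by
          rw [hε]
          refine (Finset.lt_inf'_iff hFne).2 ?_
          intro z hz
          exact ih (by linarith) (by rwa [hF, Set.Finite.mem_toFinset] at hz)
        have hglow : ∀ z, ε * ind B z ≤ T (t - s) (ind A) z := by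
          intro z
          by_cases hz : z ∈ B
          · rw [ind_mem hz, mul_one]
            exact Finset.inf'_le _ (by rwa [hF, Set.Finite.mem_toFinset])
          · rw [ind_not_mem hz, mul_zero]
            exact T_nonneg hQ hT (fun y => ind_nonneg A y) (by linarith) z
        have hsplit : T t (ind A) = T s (T (t - s) (ind A)) := by
          rw [← T_semigroup hQ hT (ind A) hs0.le (by linarith : (0:ℝ) ≤ t - s)]
          norm_num
        rw [hsplit]
        have h1 : T s (ε • ind B) x ≤ T s (T (t - s) (ind A)) x :=
          T_mono hQ hT (fun z => by simpa using hglow z) hs0.le x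
        have h2 : T s (ε • ind B) x = ε * T s (ind B) x := by
          rw [T_smul hQ hT hεpos.le _ hs0.le]; simp
        have : 0 < ε * T s (ind B) x := mul_pos hεpos hGs
        linarith

/-- LP2: if `A` is not lower reachable from `x` then the lower transition
probability to `A` is zero. -/
lemma T_zero_of_not_lowerReach (hQ : IsLTRO Q) (hT : IsSol Q T) {x : X} {A : Set X}
    (h : ¬ lowerReach Q x A) {t : ℝ} (ht : 0 ≤ t) : T t (ind A) x = 0 := by
  obtain ⟨n, hn⟩ := exists_fix Q A
  set F := (lowerStep Q)^[n] A with hFdef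
  have hxF : x ∉ F := fun hx => h ⟨n, hn, hx⟩
  have hAF : A ⊆ F := iterate_lowerStep_mono (Nat.zero_le n)
  have hfix : ∀ y, y ∉ F → Q (ind F) y ≤ 0 := by
    intro y hy
    by_contra hpos
    push_neg at hpos
    have : y ∈ lowerStep Q F := Or.inr ⟨hy, hpos⟩
    rw [show lowerStep Q F = (lowerStep Q)^[n+1] A by
      rw [Function.iterate_succ_apply', hFdef], ← hn] at this
    exact hy this
  -- the max of T r (ind F) over Fᶜ is antitone, starts at 0
  set S := (Set.toFinite (Fᶜ : Set X)).toFinset with hS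
  have hSne : S.Nonempty := by
    rw [hS, Set.Finite.toFinset_nonempty]
    exact ⟨x, hxF⟩
  have key := sup'_antitone (ι := X) (S := S) hSne
    (fun i r => T r (ind F) i) (fun i r => Q (T r (ind F)) i)
    (fun i _ r hr => hD hT (ind F) i hr) ?_ le_rfl ht
  · have h1 : T t (ind F) x ≤ S.sup' hSne (fun i => T t (ind F) i) :=
      Finset.le_sup' (fun i => T t (ind F) i) (by rw [hS, Set.Finite.mem_toFinset]; exact hxF)
    have h2 : S.sup' hSne (fun i => T 0 (ind F) i) ≤ 0 := by
      apply Finset.sup'_le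
      intro i hi
      rw [hT.1 (ind F)]
      rw [hS, Set.Finite.mem_toFinset] at hi
      exact le_of_eq (ind_not_mem hi)
    have h3 : 0 ≤ T t (ind A) x := T_nonneg hQ hT (fun y => ind_nonneg A y) ht x
    have h4 : T t (ind A) x ≤ T t (ind F) x := T_mono hQ hT (ind_mono hAF) ht x
    have key' : S.sup' hSne (fun i => T t (ind F) i)
        ≤ S.sup' hSne (fun i => T 0 (ind F) i) := key
    linarith
  · -- derivative condition at the argmax
    intro r hr i hiS hmax
    show Q (T r (ind F)) i ≤ 0
    set g := T r (ind F) with hg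
    set φ := g i with hφ
    rw [hS, Set.Finite.mem_toFinset] at hiS
    have hg01 : ∀ z, 0 ≤ g z ∧ g z ≤ 1 := by
      intro z
      constructor
      · exact T_nonneg hQ hT (fun y => ind_nonneg F y) hr z
      · exact le_trans (T_le_max hQ hT (ind F) hr z) (maxf_le fun y => ind_le_one F y)
    have hφ01 : 0 ≤ φ ∧ φ ≤ 1 := hg01 i
    set dfun : X → ℝ := ((1 - φ) • ind F) + (fun _ => φ) with hdfun
    have hdom : ∀ z, g z ≤ dfun z := by
      intro z
      by_cases hz : z ∈ F
      · have : dfun z = 1 := by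
          simp only [hdfun, Pi.add_apply, Pi.smul_apply, smul_eq_mul, ind_mem hz]
          ring
        rw [this]; exact (hg01 z).2
      · have : dfun z = φ := by
          simp only [hdfun, Pi.add_apply, Pi.smul_apply, smul_eq_mul, ind_not_mem hz]
          ring
        rw [this]
        have := hmax z (by rw [hS, Set.Finite.mem_toFinset]; exact hz)
        exact this
    have heq : g i = dfun i := by
      simp only [hdfun, Pi.add_apply, Pi.smul_apply, smul_eq_mul, ind_not_mem hiS]
      rw [hφ]; ring
    have h5 : Q g i ≤ Q dfun i := q_le_of_dom hQ hdom heq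
    have h6 : Q dfun i = (1 - φ) * Q (ind F) i := by
      rw [hdfun, q_add_const hQ, hQ.2.2.1 (1 - φ) (by linarith [hφ01.2]) (ind F)]
      simp
    have h7 : (1 - φ) * Q (ind F) i ≤ 0 :=
      mul_nonpos_of_nonneg_of_nonpos (by linarith [hφ01.2]) (hfix i hiS)
    calc Q (T r (ind F)) i = Q g i := by rw [hg]
      _ ≤ Q dfun i := h5
      _ ≤ 0 := by rw [h6]; exact h7

end Reach

section Upper

open Set

variable {X : Type*} [Fintype X] [Nonempty X] {Q : (X → ℝ) → (X → ℝ)}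
  {T : ℝ → (X → ℝ) → (X → ℝ)}

lemma Tb_pos_self (hQ : IsLTRO Q) (hT : IsSol Q T) (x : X) {t : ℝ} (ht : 0 ≤ t) :
    0 < conjOp (T t) (ind {x}) x := by
  have h := Tb_exp hQ hT (f := ind {x}) (fun y => ind_nonneg _ y) ht x
  rw [ind_mem (Set.mem_singleton x)] at h
  calc (0:ℝ) < Real.exp (-(cQ Q * t)) * 1 := by positivity
    _ ≤ _ := h

lemma Tb_deriv_zero (hQ : IsLTRO Q) (hT : IsSol Q T) (f : X → ℝ) (i : X) {r : ℝ}
    (hr : 0 ≤ r) : HasDerivWithinAt (fun s => conjOp (T s) f i)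
      (conjOp Q (conjOp (T r) f) i) (Set.Ici 0) r := by
  have h0 := (hD hT (-f) i hr).neg
  have e : T r (-f) = -(conjOp (T r) f) := by simp [conjOp]
  have : HasDerivWithinAt (fun s => -(T s (-f) i)) (-(Q (T r (-f)) i)) (Set.Ici 0) r := h0
  rw [e] at this
  exact this

lemma Tb_pos_of_edge (hQ : IsLTRO Q) (hT : IsSol Q T) {z x' : X}
    (h : 0 < conjOp Q (ind {x'}) z) {s : ℝ} (hs : 0 < s) :
    0 < conjOp (T s) (ind {x'}) z := by
  by_cases hzx : z = x'
  · subst hzx; exact Tb_pos_self hQ hT z hs.le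
  · have hder : HasDerivWithinAt (fun r => conjOp (T r) (ind {x'}) z)
        (conjOp Q (ind {x'}) z) (Set.Ici 0) 0 := by
      have := Tb_deriv_zero hQ hT (ind {x'}) z (r := 0) le_rfl
      have e : conjOp (T 0) (ind {x'}) = ind {x'} := by
        simp only [conjOp]; rw [hT.1]; simp
      rwa [e] at this
    have hG0 : conjOp (T 0) (ind {x'}) z = 0 := by
      simp only [conjOp, Pi.neg_apply]
      rw [hT.1]
      simp only [Pi.neg_apply, neg_neg]
      exact ind_not_mem (by simpa using hzx)
    obtain ⟨s0, h1, h2, h3⟩ := deriv_pos_small hder hG0 h hs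
    set g := conjOp (T s0) (ind {x'}) with hg
    have hsplit : conjOp (T s) (ind {x'}) = conjOp (T (s - s0)) g := by
      have e := Tb_semigroup hQ hT (ind {x'}) (t := s - s0) (s := s0)
        (by linarith) h1.le
      rw [show s - s0 + s0 = s by ring] at e
      rw [hg]; exact e
    rw [hsplit]
    have hgnn : ∀ w, 0 ≤ g w := fun w => Tb_nonneg hQ hT (fun y => ind_nonneg _ y) h1.le w
    have hglow : ∀ w, g z * ind {z} w ≤ g w := by
      intro w
      by_cases hw : w = z
      · subst hw; rw [ind_mem (Set.mem_singleton _), mul_one]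
      · rw [ind_not_mem (by simpa using hw), mul_zero]; exact hgnn w
    calc (0:ℝ) < g z * conjOp (T (s - s0)) (ind {z}) z :=
          mul_pos h3 (Tb_pos_self hQ hT z (by linarith))
      _ = conjOp (T (s - s0)) (g z • ind {z}) z := by
          rw [Tb_smul hQ hT h3.le _ (by linarith)]; simp
      _ ≤ conjOp (T (s - s0)) g z :=
          Tb_mono hQ hT (fun w => by simpa using hglow w) (by linarith) z

lemma Tb_pos_chain (hQ : IsLTRO Q) (hT : IsSol Q T) (p : ℕ → X) : ∀ n : ℕ,
    (∀ k, k < n → 0 < conjOp Q (ind {p (k + 1)}) (p k)) →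
    ∀ t : ℝ, 0 < t → 0 < conjOp (T t) (ind {p n}) (p 0) := by
  intro n
  induction n with
  | zero => exact fun _ t ht => Tb_pos_self hQ hT _ ht.le
  | succ n ih =>
      intro hsteps t ht
      have hedge : 0 < conjOp Q (ind {p (n + 1)}) (p n) := hsteps n (Nat.lt_succ_self n)
      have h1 : 0 < conjOp (T (t / 2)) (ind {p (n + 1)}) (p n) :=
        Tb_pos_of_edge hQ hT hedge (by linarith)
      have h2 : 0 < conjOp (T (t / 2)) (ind {p n}) (p 0) :=
        ih (fun k hk => hsteps k (hk.trans (Nat.lt_succ_self n))) (t / 2) (by linarith)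
      set g := conjOp (T (t / 2)) (ind {p (n + 1)}) with hg
      have hsplit : conjOp (T t) (ind {p (n + 1)}) = conjOp (T (t / 2)) g := by
        have e := Tb_semigroup hQ hT (ind {p (n + 1)}) (t := t / 2) (s := t / 2)
          (by linarith) (by linarith)
        rw [show t / 2 + t / 2 = t by ring] at e
        rw [hg]; exact e
      rw [hsplit]
      have hgnn : ∀ w, 0 ≤ g w := fun w =>
        Tb_nonneg hQ hT (fun y => ind_nonneg _ y) (by linarith) w
      have hglow : ∀ w, g (p n) * ind {p n} w ≤ g w := by
        intro w
        by_cases hw : w = p n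
        · subst hw; rw [ind_mem (Set.mem_singleton _), mul_one]
        · rw [ind_not_mem (by simpa using hw), mul_zero]; exact hgnn w
      calc (0:ℝ) < g (p n) * conjOp (T (t / 2)) (ind {p n}) (p 0) := mul_pos h1 h2
        _ = conjOp (T (t / 2)) (g (p n) • ind {p n}) (p 0) := by
            rw [Tb_smul hQ hT h1.le _ (by linarith)]; simp
        _ ≤ conjOp (T (t / 2)) g (p 0) :=
            Tb_mono hQ hT (fun w => by simpa using hglow w) (by linarith) _

/-- UR: upper reachability implies positivity of the upper transition probability. -/
lemma Tb_pos_of_upperReach (hQ : IsLTRO Q) (hT : IsSol Q T) {y x : X}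
    (h : upperReach Q y x) {t : ℝ} (ht : 0 < t) : 0 < conjOp (T t) (ind {x}) y := by
  obtain ⟨n, p, hp0, hpn, hsteps⟩ := h
  have := Tb_pos_chain hQ hT p n (fun k hk => (hsteps k hk).2) t ht
  rwa [hp0, hpn] at this

/-- UB: if `S` is closed under upper-rate edges then the upper probability of
leaving `S` is zero. -/
lemma Tb_zero_of_closed (hQ : IsLTRO Q) (hT : IsSol Q T) {S : Set X}
    (hcl : ∀ z ∈ S, ∀ z', z' ∉ S → conjOp Q (ind {z'}) z ≤ 0)
    {z : X} (hz : z ∈ S) {t : ℝ} (ht : 0 ≤ t) : conjOp (T t) (ind Sᶜ) z = 0 := by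
  classical
  set Sf := (Set.toFinite S).toFinset with hSf
  have hSfne : Sf.Nonempty := ⟨z, by rw [hSf, Set.Finite.mem_toFinset]; exact hz⟩
  have key := sup'_antitone (ι := X) (S := Sf) hSfne
    (fun i r => conjOp (T r) (ind Sᶜ) i)
    (fun i r => conjOp Q (conjOp (T r) (ind Sᶜ)) i)
    (fun i _ r hr => Tb_deriv_zero hQ hT (ind Sᶜ) i hr) ?_ le_rfl ht
  · have h1 : conjOp (T t) (ind Sᶜ) z ≤ Sf.sup' hSfne (fun i => conjOp (T t) (ind Sᶜ) i) :=
      Finset.le_sup' (fun i => conjOp (T t) (ind Sᶜ) i)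
        (by rw [hSf, Set.Finite.mem_toFinset]; exact hz)
    have h2 : Sf.sup' hSfne (fun i => conjOp (T 0) (ind Sᶜ) i) ≤ 0 := by
      apply Finset.sup'_le
      intro i hi
      rw [hSf, Set.Finite.mem_toFinset] at hi
      have : conjOp (T 0) (ind Sᶜ) i = ind Sᶜ i := by
        simp only [conjOp, Pi.neg_apply]; rw [hT.1]; simp
      rw [this, ind_not_mem (by simpa using hi)]
    have h3 : 0 ≤ conjOp (T t) (ind Sᶜ) z :=
      Tb_nonneg hQ hT (fun y => ind_nonneg _ y) ht z
    have key' : Sf.sup' hSfne (fun i => conjOp (T t) (ind Sᶜ) i)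
        ≤ Sf.sup' hSfne (fun i => conjOp (T 0) (ind Sᶜ) i) := key
    linarith
  · intro r hr i hiS hmax
    show conjOp Q (conjOp (T r) (ind Sᶜ)) i ≤ 0
    set g := conjOp (T r) (ind Sᶜ) with hgdef
    set φ := g i with hφ
    rw [hSf, Set.Finite.mem_toFinset] at hiS
    have hg01 : ∀ w, 0 ≤ g w ∧ g w ≤ 1 := fun w =>
      ⟨Tb_nonneg hQ hT (fun y => ind_nonneg _ y) hr w,
        le_trans (Tb_le_max hQ hT (ind Sᶜ) hr w) (maxf_le fun y => ind_le_one _ y)⟩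
    set dfun : X → ℝ := ((1 - φ) • ind Sᶜ) + (fun _ => φ) with hdfun
    have hdom : ∀ w, g w ≤ dfun w := by
      intro w
      by_cases hw : w ∈ S
      · have : dfun w = φ := by
          simp only [hdfun, Pi.add_apply, Pi.smul_apply, smul_eq_mul,
            ind_not_mem (by simpa using hw : w ∉ Sᶜ)]
          ring
        rw [this]
        exact hmax w (by rw [hSf, Set.Finite.mem_toFinset]; exact hw)
      · have : dfun w = 1 := by
          simp only [hdfun, Pi.add_apply, Pi.smul_apply, smul_eq_mul,
            ind_mem (by simpa using hw : w ∈ Sᶜ)]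
          ring
        rw [this]; exact (hg01 w).2
    have heq : g i = dfun i := by
      simp only [hdfun, Pi.add_apply, Pi.smul_apply, smul_eq_mul,
        ind_not_mem (by simpa using hiS : i ∉ Sᶜ)]
      rw [hφ]; ring
    have h5 : conjOp Q g i ≤ conjOp Q dfun i := qbar_le_of_dom hQ hdom heq
    have h6 : conjOp Q dfun i = (1 - φ) * conjOp Q (ind Sᶜ) i := by
      rw [hdfun, qbar_add_const hQ, qbar_smul hQ (by linarith [(hg01 i).2]) (ind Sᶜ)]
      simp
    have h7 : conjOp Q (ind Sᶜ) i ≤ 0 := by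
      have hsum := qbar_sum hQ (Set.toFinite (Sᶜ : Set X)).toFinset (fun w => ind {w}) i
      rw [← ind_eq_sum] at hsum
      refine le_trans hsum ?_
      rw [Finset.sum_apply]
      apply Finset.sum_nonpos
      intro w hw
      rw [Set.Finite.mem_toFinset] at hw
      exact hcl i hiS w (by simpa using hw)
    have h8 : (1 - φ) * conjOp Q (ind Sᶜ) i ≤ 0 :=
      mul_nonpos_of_nonneg_of_nonpos (by linarith [(hg01 i).2]) h7
    calc conjOp Q g i ≤ conjOp Q dfun i := h5
      _ ≤ 0 := by rw [h6]; exact h8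

end Upper

section UpperComb

open Set

variable {X : Type*} [Fintype X] [Nonempty X] {Q : (X → ℝ) → (X → ℝ)}

lemma upperReach_refl (x : X) : upperReach Q x x :=
  ⟨0, fun _ => x, rfl, rfl, fun k hk => absurd hk (Nat.not_lt_zero k)⟩

lemma upperReach_trans {x y z : X} (h1 : upperReach Q x y) (h2 : upperReach Q y z) :
    upperReach Q x z := by
  obtain ⟨n1, p1, hp10, hp1n, hs1⟩ := h1
  obtain ⟨n2, p2, hp20, hp2n, hs2⟩ := h2
  refine ⟨n1 + n2, fun k => if k < n1 then p1 k else p2 (k - n1), ?_, ?_, ?_⟩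
  · show (if 0 < n1 then p1 0 else p2 (0 - n1)) = x
    by_cases h : 0 < n1
    · rw [if_pos h, hp10]
    · have h0 : n1 = 0 := by omega
      subst h0
      rw [if_neg h, Nat.sub_zero, hp20, ← hp1n, hp10]
  · show (if n1 + n2 < n1 then p1 (n1 + n2) else p2 (n1 + n2 - n1)) = z
    have : ¬ (n1 + n2 < n1) := by omega
    rw [if_neg this, show n1 + n2 - n1 = n2 by omega, hp2n]
  · intro k hk
    show (if k + 1 < n1 then p1 (k + 1) else p2 (k + 1 - n1)) ≠
        (if k < n1 then p1 k else p2 (k - n1)) ∧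
      0 < conjOp Q (ind {if k + 1 < n1 then p1 (k + 1) else p2 (k + 1 - n1)})
        (if k < n1 then p1 k else p2 (k - n1))
    by_cases hc1 : k + 1 < n1
    · have hck : k < n1 := by omega
      rw [if_pos hc1, if_pos hck]
      exact hs1 k (by omega)
    · by_cases hc2 : k + 1 = n1
      · have hck : k < n1 := by omega
        rw [if_neg hc1, if_pos hck]
        rw [show k + 1 - n1 = 0 by omega, hp20, ← hp1n, ← hc2]
        exact hs1 k (by omega)
      · have hck : ¬ (k < n1) := by omega
        rw [if_neg hc1, if_neg hck]
        rw [show k + 1 - n1 = (k - n1) + 1 by omega]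
        exact hs2 (k - n1) (by omega)

lemma upperReach_of_edge {z z' : X} (h : 0 < conjOp Q (ind {z'}) z) :
    upperReach Q z z' := by
  by_cases hzz : z' = z
  · rw [hzz]; exact upperReach_refl z
  · exact ⟨1, fun k => if k = 0 then z else z', by simp, by simp, fun k hk => by
      have : k = 0 := by omega
      subst this
      simpa [hzz] using h⟩

/-- The set of states reachable from `x`. -/
def Dset (Q : (X → ℝ) → (X → ℝ)) (x : X) : Set X := {z | upperReach Q x z}

lemma mem_Dset_self (x : X) : x ∈ Dset Q x := upperReach_refl x

lemma Dset_closed (x : X) : ∀ z ∈ Dset Q x, ∀ z', z' ∉ Dset Q x →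
    conjOp Q (ind {z'}) z ≤ 0 := by
  intro z hz z' hz'
  by_contra hpos
  push_neg at hpos
  exact hz' (upperReach_trans hz (upperReach_of_edge hpos))

lemma Dset_subset {x z : X} (h : z ∈ Dset Q x) : Dset Q z ⊆ Dset Q x :=
  fun w hw => upperReach_trans h hw

lemma E_closed : ∀ z ∈ {x : X | ∀ y, upperReach Q y x}, ∀ z',
    z' ∉ {x : X | ∀ y, upperReach Q y x} → conjOp Q (ind {z'}) z ≤ 0 := by
  intro z hz z' hz'
  by_contra hpos
  push_neg at hpos
  exact hz' (fun y => upperReach_trans (hz y) (upperReach_of_edge hpos))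

lemma exists_two_classes (hE : ¬ ({x : X | ∀ y, upperReach Q y x}.Nonempty)) :
    ∃ C1 C2 : Set X, C1.Nonempty ∧ C2.Nonempty ∧ (∀ z, z ∈ C1 → z ∉ C2) ∧
      (∀ z ∈ C1, ∀ z', z' ∉ C1 → conjOp Q (ind {z'}) z ≤ 0) ∧
      (∀ z ∈ C2, ∀ z', z' ∉ C2 → conjOp Q (ind {z'}) z ≤ 0) := by
  classical
  -- first minimal class
  obtain ⟨x0, -, hx0⟩ := Finset.exists_min_image Finset.univ
    (fun x : X => (Dset Q x).ncard) Finset.univ_nonempty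
  have hC1min : ∀ z ∈ Dset Q x0, Dset Q z = Dset Q x0 := by
    intro z hz
    refine Set.eq_of_subset_of_ncard_le (Dset_subset hz) ?_ (Set.toFinite _)
    exact hx0 z (Finset.mem_univ z)
  -- x0 is not in E
  have hx0E : ∃ y1, ¬ upperReach Q y1 x0 := by
    by_contra hcon
    push_neg at hcon
    exact hE ⟨x0, hcon⟩
  obtain ⟨y1, hy1⟩ := hx0E
  -- second minimal class inside Dset y1
  set Df := (Set.toFinite (Dset Q y1)).toFinset with hDf
  have hDfne : Df.Nonempty := ⟨y1, by rw [hDf, Set.Finite.mem_toFinset]; exact mem_Dset_self y1⟩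
  obtain ⟨x1, hx1mem, hx1⟩ := Finset.exists_min_image Df
    (fun x : X => (Dset Q x).ncard) hDfne
  rw [hDf, Set.Finite.mem_toFinset] at hx1mem
  have hC2min : ∀ z ∈ Dset Q x1, Dset Q z = Dset Q x1 := by
    intro z hz
    refine Set.eq_of_subset_of_ncard_le (Dset_subset hz) ?_ (Set.toFinite _)
    exact hx1 z (by
      rw [hDf, Set.Finite.mem_toFinset]
      exact Dset_subset hx1mem hz)
  refine ⟨Dset Q x0, Dset Q x1, ⟨x0, mem_Dset_self x0⟩, ⟨x1, mem_Dset_self x1⟩, ?_,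
    Dset_closed x0, Dset_closed x1⟩
  intro z hz1 hz2
  have he : Dset Q x0 = Dset Q x1 := by rw [← hC1min z hz1, ← hC2min z hz2]
  have : x0 ∈ Dset Q x1 := he ▸ mem_Dset_self x0
  have : x0 ∈ Dset Q y1 := Dset_subset hx1mem this
  exact hy1 this

end UpperComb

section OscHelpers

variable {X : Type*} [Fintype X] [Nonempty X]

lemma maxf_const (c : ℝ) : maxf (fun _ : X => c) = c := Finset.sup'_const _ c

lemma minf_const (c : ℝ) : minf (fun _ : X => c) = c := Finset.inf'_const _ c

lemma maxf_affine {a c : ℝ} (ha : 0 ≤ a) (h : X → ℝ) :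
    maxf (fun y => a * h y + c) = a * maxf h + c := by
  refine le_antisymm (maxf_le fun y => by
    have := le_maxf h y
    nlinarith) ?_
  obtain ⟨y, hy, -⟩ := exists_maxf h
  calc a * maxf h + c = a * h y + c := by rw [hy]
    _ ≤ maxf (fun y => a * h y + c) := le_maxf (fun z => a * h z + c) y

lemma minf_affine {a c : ℝ} (ha : 0 ≤ a) (h : X → ℝ) :
    minf (fun y => a * h y + c) = a * minf h + c := by
  refine le_antisymm ?_ (le_minf fun y => by
    have := minf_le h y
    nlinarith)
  obtain ⟨y, hy, -⟩ := exists_minf h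
  calc minf (fun y => a * h y + c) ≤ a * h y + c := minf_le (fun z => a * h z + c) y
    _ = a * minf h + c := by rw [hy]

end OscHelpers

section MainSuff

open Set Filter Topology

variable {X : Type*} [Fintype X] [Nonempty X] {Q : (X → ℝ) → (X → ℝ)}
  {T : ℝ → (X → ℝ) → (X → ℝ)}

lemma ergodic_of_conditions (hQ : IsLTRO Q) (hT : IsSol Q T)
    (hne : {x : X | ∀ y, upperReach Q y x}.Nonempty)
    (hlow : ∀ x, x ∉ {x : X | ∀ y, upperReach Q y x} →
      lowerReach Q x {x : X | ∀ y, upperReach Q y x}) :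
    ∀ f : X → ℝ, ∃ c : ℝ, Tendsto (fun t => T t f) atTop (𝓝 (fun _ : X => c)) := by
  classical
  set E := {x : X | ∀ y, upperReach Q y x} with hE
  have hlowAll : ∀ x : X, lowerReach Q x E := by
    intro x
    by_cases hx : x ∈ E
    · exact lowerReach_of_mem hx
    · exact hlow x hx
  set δ := minf (fun x => T 1 (ind E) x) with hδ
  have hδpos : 0 < δ := by
    obtain ⟨x, hx, -⟩ := exists_minf (fun x => T 1 (ind E) x)
    rw [hδ, ← hx]
    exact T_pos_of_lowerReach hQ hT (hlowAll x) one_pos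
  have hδ1 : δ ≤ 1 := by
    obtain ⟨x0⟩ := ‹Nonempty X›
    calc δ ≤ T 1 (ind E) x0 := minf_le _ x0
      _ ≤ maxf (ind E) := T_le_max hQ hT _ one_pos.le x0
      _ ≤ 1 := maxf_le fun y => ind_le_one E y
  have hT2E : ∀ x, δ ≤ T 2 (ind E) x := by
    intro x
    have h21 : T 2 (ind E) = T 1 (T 1 (ind E)) := by
      have := T_semigroup hQ hT (ind E) (t := 1) (s := 1) one_pos.le one_pos.le
      rw [show (1:ℝ) + 1 = 2 by norm_num] at this
      exact this
    rw [h21]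
    have hd : ∀ z, (fun _ : X => δ) z ≤ T 1 (ind E) z := fun z => minf_le _ z
    have := T_mono hQ hT hd one_pos.le x
    rwa [T_const hQ hT δ one_pos.le] at this
  set Ef := (Set.toFinite E).toFinset with hEf
  have hEfne : Ef.Nonempty := by
    obtain ⟨e, he⟩ := hne
    exact ⟨e, by rw [hEf, Set.Finite.mem_toFinset]; exact he⟩
  set γ := Ef.inf' hEfne (fun e => minf (fun x => conjOp (T 2) (ind {e}) x)) with hγ
  have hγpos : 0 < γ := by
    rw [hγ]
    refine (Finset.lt_inf'_iff hEfne).2 ?_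
    intro e heEf
    rw [hEf, Set.Finite.mem_toFinset] at heEf
    obtain ⟨y, hy, -⟩ := exists_minf (fun x => conjOp (T 2) (ind {e}) x)
    rw [← hy]
    exact Tb_pos_of_upperReach hQ hT (heEf y) two_pos
  set β := min γ δ with hβ
  have hβpos : 0 < β := lt_min hγpos hδpos
  have hβ1 : β ≤ 1 := le_trans (min_le_right _ _) hδ1
  -- core contraction for [0,1]-valued functions
  have hcore : ∀ g : X → ℝ, (∀ y, 0 ≤ g y) → (∀ y, g y ≤ 1) →
      ∀ x y : X, T 2 g x - T 2 g y ≤ 1 - β := by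
    intro g hg0 hg1 x y
    obtain ⟨e, heEf, hemin⟩ := Finset.exists_min_image Ef (fun e => g e) hEfne
    have heE : e ∈ E := by rwa [hEf, Set.Finite.mem_toFinset] at heEf
    set m := g e with hm
    have hm0 : 0 ≤ m := hg0 e
    have hm1 : m ≤ 1 := hg1 e
    have hi : m * δ ≤ T 2 g y := by
      have hdom : ∀ z, m * ind E z ≤ g z := by
        intro z
        by_cases hz : z ∈ E
        · rw [ind_mem hz, mul_one]
          exact hemin z (by rw [hEf, Set.Finite.mem_toFinset]; exact hz)
        · rw [ind_not_mem hz, mul_zero]; exact hg0 z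
      calc m * δ ≤ m * T 2 (ind E) y := mul_le_mul_of_nonneg_left (hT2E y) hm0
        _ = T 2 (m • ind E) y := by
            rw [T_smul hQ hT hm0 _ (by norm_num : (0:ℝ) ≤ 2)]; simp
        _ ≤ T 2 g y := T_mono hQ hT (fun z => by simpa using hdom z)
            (by norm_num : (0:ℝ) ≤ 2) y
    have hii : (1 - m) * γ ≤ conjOp (T 2) (fun z => 1 - g z) x := by
      have hdom : ∀ z, (1 - m) * ind {e} z ≤ 1 - g z := by
        intro z
        by_cases hz : z = e
        · subst hz
          rw [ind_mem (Set.mem_singleton _), mul_one, hm]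
        · rw [ind_not_mem (by simpa using hz), mul_zero]
          linarith [hg1 z]
      have h1 : conjOp (T 2) ((1 - m) • ind {e}) x ≤ conjOp (T 2) (fun z => 1 - g z) x :=
        Tb_mono hQ hT (fun z => by simpa using hdom z) (by norm_num : (0:ℝ) ≤ 2) x
      have h2 : conjOp (T 2) ((1 - m) • ind {e}) x = (1 - m) * conjOp (T 2) (ind {e}) x := by
        rw [Tb_smul hQ hT (by linarith) _ (by norm_num : (0:ℝ) ≤ 2)]; simp
      have h3 : γ ≤ conjOp (T 2) (ind {e}) x := by
        refine le_trans (Finset.inf'_le _ heEf) ?_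
        exact minf_le _ x
      calc (1 - m) * γ ≤ (1 - m) * conjOp (T 2) (ind {e}) x :=
            mul_le_mul_of_nonneg_left h3 (by linarith)
        _ = conjOp (T 2) ((1 - m) • ind {e}) x := h2.symm
        _ ≤ conjOp (T 2) (fun z => 1 - g z) x := h1
    have hiii : T 2 g x + conjOp (T 2) (fun z => 1 - g z) x ≤ 1 := by
      have hadd := T_add_Tb_le hQ hT g (fun z => 1 - g z) (by norm_num : (0:ℝ) ≤ 2) x
      have he2 : g + (fun z => 1 - g z) = (fun _ : X => (1:ℝ)) := by
        funext z; simp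
      rw [he2, Tb_one hQ hT (by norm_num : (0:ℝ) ≤ 2) x] at hadd
      exact hadd
    have hβle : β ≤ (1 - m) * γ + m * δ := by
      have h4 : β ≤ γ := min_le_left _ _
      have h5 : β ≤ δ := min_le_right _ _
      nlinarith
    linarith
  -- oscillation contraction
  have hosc2 : ∀ h : X → ℝ, maxf (T 2 h) - minf (T 2 h)
      ≤ (1 - β) * (maxf h - minf h) := by
    intro h
    rcases eq_or_lt_of_le (minf_le_maxf h) with heq | hlt
    · have hconst : h = fun _ => minf h := by
        funext z
        exact le_antisymm (heq ▸ le_maxf h z) (minf_le h z)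
      have hTc : T 2 h = fun _ => minf h := by
        conv_lhs => rw [hconst]
        exact T_const hQ hT _ (by norm_num : (0:ℝ) ≤ 2)
      rw [hTc, maxf_const, minf_const, ← heq]
      simp
    · set o := maxf h - minf h with ho_def
      have ho : 0 < o := sub_pos.2 hlt
      set g : X → ℝ := fun z => (h z - minf h) / o with hgdef
      have hg0 : ∀ z, 0 ≤ g z := fun z =>
        div_nonneg (sub_nonneg.2 (minf_le h z)) ho.le
      have hg1 : ∀ z, g z ≤ 1 := fun z => by
        rw [hgdef, div_le_one ho]
        have := le_maxf h z
        rw [ho_def]; linarith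
      have hrep : h = (o • g) + fun _ => minf h := by
        funext z
        simp only [Pi.add_apply, Pi.smul_apply, smul_eq_mul, hgdef]
        field_simp
        ring
      have hT2 : T 2 h = (o • T 2 g) + fun _ => minf h := by
        conv_lhs => rw [hrep]
        rw [T_add_const hQ hT _ _ (by norm_num : (0:ℝ) ≤ 2),
          T_smul hQ hT ho.le _ (by norm_num : (0:ℝ) ≤ 2)]
      have hTmax : maxf (T 2 h) = o * maxf (T 2 g) + minf h := by
        rw [hT2, show ((o • T 2 g) + fun _ => minf h) = fun y => o * T 2 g y + minf h from
          by funext z; simp, maxf_affine ho.le]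
      have hTmin : minf (T 2 h) = o * minf (T 2 g) + minf h := by
        rw [hT2, show ((o • T 2 g) + fun _ => minf h) = fun y => o * T 2 g y + minf h from
          by funext z; simp, minf_affine ho.le]
      obtain ⟨xM, hxM, -⟩ := exists_maxf (T 2 g)
      obtain ⟨xm, hxm, -⟩ := exists_minf (T 2 g)
      have hc := hcore g hg0 hg1 xM xm
      have hosc1 : maxf (T 2 g) - minf (T 2 g) ≤ 1 - β := by
        rw [← hxM, ← hxm]; exact hc
      have hmul : o * (maxf (T 2 g) - minf (T 2 g)) ≤ o * (1 - β) :=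
        mul_le_mul_of_nonneg_left hosc1 ho.le
      rw [hTmax, hTmin, ho_def]
      ring_nf
      ring_nf at hmul
      linarith
  intro f
  -- monotonicity of min/max in time
  have hmm : ∀ s t : ℝ, 0 ≤ s → s ≤ t →
      minf (T s f) ≤ minf (T t f) ∧ maxf (T t f) ≤ maxf (T s f) := by
    intro s t hs hst
    have hsplit : T t f = T (t - s) (T s f) := by
      have := T_semigroup hQ hT f (t := t - s) (s := s) (by linarith) hs
      rw [show t - s + s = t by ring] at this
      exact this
    constructor
    · refine le_minf fun x => ?_
      rw [hsplit]
      exact le_trans (le_minf fun z => minf_le (T s f) z)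
        (min_le_T hQ hT (T s f) (by linarith) x)
    · refine maxf_le fun x => ?_
      rw [hsplit]
      exact le_trans (T_le_max hQ hT (T s f) (by linarith) x)
        (maxf_le fun z => le_maxf (T s f) z)
  -- iterated contraction
  have hit : ∀ n : ℕ, maxf (T (2 * n) f) - minf (T (2 * n) f)
      ≤ (1 - β) ^ n * (maxf f - minf f) := by
    intro n
    induction n with
    | zero => simp [hT.1 f]
    | succ n ih =>
        have hsplit : T (2 * ((n:ℝ) + 1)) f = T 2 (T (2 * (n:ℝ)) f) := by
          have := T_semigroup hQ hT f (t := 2) (s := 2 * (n:ℝ))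
            (by norm_num) (by positivity)
          rw [show (2:ℝ) + 2 * (n:ℝ) = 2 * ((n:ℝ) + 1) by ring] at this
          exact this
        push_cast
        rw [hsplit]
        calc maxf (T 2 (T (2 * (n:ℝ)) f)) - minf (T 2 (T (2 * (n:ℝ)) f))
            ≤ (1 - β) * (maxf (T (2 * (n:ℝ)) f) - minf (T (2 * (n:ℝ)) f)) := hosc2 _
          _ ≤ (1 - β) * ((1 - β) ^ n * (maxf f - minf f)) :=
              mul_le_mul_of_nonneg_left ih (by linarith)
          _ = (1 - β) ^ (n + 1) * (maxf f - minf f) := by ring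
  -- the limit value
  set mfun : ℝ → ℝ := fun t => minf (T t f) with hmfun
  have hub : ∀ t ∈ Set.Ici (0:ℝ), mfun t ≤ maxf f := by
    intro t ht
    calc mfun t ≤ maxf (T t f) := minf_le_maxf _
      _ ≤ maxf (T 0 f) := (hmm 0 t le_rfl ht).2
      _ = maxf f := by rw [hT.1 f]
  have hbdd : BddAbove (mfun '' Set.Ici 0) := by
    refine ⟨maxf f, ?_⟩
    rintro r ⟨t, ht, rfl⟩
    exact hub t ht
  have hne' : (mfun '' Set.Ici 0).Nonempty :=
    ⟨mfun 0, Set.mem_image_of_mem _ Set.self_mem_Ici⟩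
  set c := sSup (mfun '' Set.Ici 0) with hc
  refine ⟨c, ?_⟩
  rw [tendsto_pi_nhds]
  intro x
  rw [Metric.tendsto_atTop]
  intro ε hε
  have htr : Tendsto (fun n : ℕ => (1 - β) ^ n * (maxf f - minf f)) atTop (𝓝 0) := by
    have h0 := tendsto_pow_atTop_nhds_zero_of_lt_one (by linarith : (0:ℝ) ≤ 1 - β)
      (by linarith : 1 - β < 1)
    simpa using h0.mul_const (maxf f - minf f)
  obtain ⟨n, hn⟩ := (htr.eventually (gt_mem_nhds hε)).exists
  refine ⟨2 * n, fun t ht2n => ?_⟩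
  have ht0 : (0:ℝ) ≤ t := le_trans (by positivity) ht2n
  have hosct : maxf (T t f) - minf (T t f) < ε := by
    have h1 := hmm (2 * (n:ℝ)) t (by positivity) ht2n
    have h2 := hit n
    linarith [h1.1, h1.2]
  have hlo : mfun t ≤ c := le_csSup hbdd ⟨t, ht0, rfl⟩
  have hhi : c ≤ maxf (T t f) := by
    refine csSup_le hne' ?_
    rintro r ⟨s, hs, rfl⟩
    rcases le_or_gt s t with hst | hts
    · calc mfun s ≤ mfun t := (hmm s t hs hst).1
        _ ≤ maxf (T t f) := minf_le_maxf _
    · calc mfun s ≤ maxf (T s f) := minf_le_maxf _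
        _ ≤ maxf (T t f) := (hmm t s ht0 hts.le).2
  have hx1 : mfun t ≤ T t f x := minf_le _ x
  have hx2 : T t f x ≤ maxf (T t f) := le_maxf _ x
  rw [Real.dist_eq, abs_lt]
  constructor <;> [skip; skip] <;> linarith

end MainSuff

section MainNec

open Set Filter Topology

variable {X : Type*} [Fintype X] [Nonempty X] {Q : (X → ℝ) → (X → ℝ)}
  {T : ℝ → (X → ℝ) → (X → ℝ)}

lemma limit_eq {f : X → ℝ} {c a : ℝ}
    (h : Filter.Tendsto (fun t => T t f) Filter.atTop (nhds (fun _ : X => c))) (z : X)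
    (hval : ∀ t, 0 ≤ t → T t f z = a) : c = a := by
  have h1 : Filter.Tendsto (fun t => T t f z) Filter.atTop (nhds c) := tendsto_pi_nhds.1 h z
  have h2 : (fun t => T t f z) =ᶠ[Filter.atTop] (fun _ => a) :=
    Filter.eventually_atTop.2 ⟨0, fun t ht => hval t ht⟩
  have h3 : Filter.Tendsto (fun _ : ℝ => a) Filter.atTop (nhds c) := h1.congr' h2
  exact tendsto_nhds_unique h3 tendsto_const_nhds

lemma T_ind_eq_one_sub (hQ : IsLTRO Q) (hT : IsSol Q T) (A : Set X) {t : ℝ}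
    (ht : 0 ≤ t) (z : X) : T t (ind A) z = 1 - conjOp (T t) (ind Aᶜ) z := by
  classical
  have he : ind A = (-(ind Aᶜ)) + fun _ => (1:ℝ) := by
    funext w
    simp only [Pi.add_apply, Pi.neg_apply]
    by_cases hw : w ∈ A
    · rw [ind_mem hw, ind_not_mem (by simpa using hw : w ∉ Aᶜ)]; ring
    · rw [ind_not_mem hw, ind_mem (by simpa using hw : w ∈ Aᶜ)]; ring
  rw [he, T_add_const hQ hT _ _ ht]
  simp only [conjOp, Pi.add_apply, Pi.neg_apply]
  ring

end MainNec

section FinalProof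

open Set Filter Topology

variable {X : Type*} [Fintype X] [Nonempty X]

theorem main_thm (Q : (X → ℝ) → (X → ℝ)) (hQ : IsLTRO Q)
    (T : ℝ → (X → ℝ) → (X → ℝ)) (hT : IsSol Q T) :
    ErgodicQ T ↔
      ({x : X | ∀ y : X, upperReach Q y x}.Nonempty ∧
        ∀ x : X, x ∉ {x : X | ∀ y : X, upperReach Q y x} →
          lowerReach Q x {x : X | ∀ y : X, upperReach Q y x}) := by
  classical
  constructor
  · intro herg
    have hEne : {x : X | ∀ y : X, upperReach Q y x}.Nonempty := by
      by_contra hE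
      obtain ⟨C1, C2, hC1ne, hC2ne, hdisj, hcl1, hcl2⟩ := exists_two_classes hE
      obtain ⟨c, hc⟩ := herg (ind C1)
      obtain ⟨z1, hz1⟩ := hC1ne
      obtain ⟨z2, hz2⟩ := hC2ne
      have hv1 : ∀ t, 0 ≤ t → T t (ind C1) z1 = 1 := by
        intro t ht
        rw [T_ind_eq_one_sub hQ hT C1 ht z1, Tb_zero_of_closed hQ hT hcl1 hz1 ht]
        ring
      have hv2 : ∀ t, 0 ≤ t → T t (ind C1) z2 = 0 := by
        intro t ht
        have hsub : ∀ w, ind C1 w ≤ ind C2ᶜ w :=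
          ind_mono (fun w hw => (by simpa using hdisj w hw : w ∈ C2ᶜ))
        have hub : T t (ind C1) z2 ≤ conjOp (T t) (ind C2ᶜ) z2 :=
          le_trans (T_le_Tb hQ hT (ind C1) ht z2) (Tb_mono hQ hT hsub ht z2)
        rw [Tb_zero_of_closed hQ hT hcl2 hz2 ht] at hub
        exact le_antisymm hub (T_nonneg hQ hT (fun w => ind_nonneg C1 w) ht z2)
      have e1 : c = 1 := limit_eq hc z1 hv1
      have e2 : c = 0 := limit_eq hc z2 hv2
      rw [e1] at e2
      norm_num at e2
    refine ⟨hEne, ?_⟩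
    intro x0 hx0
    by_contra hnl
    obtain ⟨c, hc⟩ := herg (ind {x : X | ∀ y : X, upperReach Q y x})
    have hv0 : ∀ t, 0 ≤ t → T t (ind {x : X | ∀ y : X, upperReach Q y x}) x0 = 0 :=
      fun t ht => T_zero_of_not_lowerReach hQ hT hnl ht
    obtain ⟨e, he⟩ := hEne
    have hv1 : ∀ t, 0 ≤ t → T t (ind {x : X | ∀ y : X, upperReach Q y x}) e = 1 := by
      intro t ht
      rw [T_ind_eq_one_sub hQ hT _ ht e, Tb_zero_of_closed hQ hT E_closed he ht]
      ring
    have e1 : c = 0 := limit_eq hc x0 hv0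
    have e2 : c = 1 := limit_eq hc e hv1
    rw [e1] at e2
    norm_num at e2
  · rintro ⟨hne, hlow⟩
    exact ergodic_of_conditions hQ hT hne hlow

end FinalProof

/-- Theorem 8 (main theorem): `Q` is ergodic iff the set `𝒳_1A` of states upper
reachable from every state is nonempty and is lower reachable from every state
outside of it. -/
theorem stmt0 {X : Type*} [Fintype X] [Nonempty X]
    (Q : (X → ℝ) → (X → ℝ)) (hQ : IsLTRO Q)
    (T : ℝ → (X → ℝ) → (X → ℝ)) (hT : IsSol Q T) :
    ErgodicQ T ↔
      ({x : X | ∀ y : X, upperReach Q y x}.Nonempty ∧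
        ∀ x : X, x ∉ {x : X | ∀ y : X, upperReach Q y x} →
          lowerReach Q x {x : X | ∀ y : X, upperReach Q y x}) :=
  main_thm Q hQ T hT
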